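/- When the offset is δ = 0, the truncated Bellman–Ford aggregates only the shortest paths: for every vertex o reachable from s, the final representation satisfies yᶠ(o) = ∑_{p ∈ P_{dist(s,o)}(s,o)} weight(p), the sum of the weights of all walks from s to o of length exactly dist(s,o). -/

import Mathlib

open Finset

/-- The weight of a walk: the product of the edge weights `wt v_{i-1} v_i` along the
walk, with the length-0 walk having weight 1. -/
def SimpleGraph.Walk.weight {V : Type*} {G : SimpleGraph V} {R : Type*} [CommSemiring R]
    (wt : V → V → R) {u v : V} (p : G.Walk u v) : R :=
  (p.darts.map fun d => wt d.fst d.snd).prod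

/-- `pathSum G wt t s o = ∑_{p ∈ P_t(s,o)} weight(p)`, the sum of the weights of all
walks of length `t` from `s` to `o` in `G`. -/
def pathSum {V : Type*} [Fintype V] [DecidableEq V] (G : SimpleGraph V) [DecidableRel G.Adj]
    {R : Type*} [CommSemiring R] (wt : V → V → R) (t : ℕ) (s o : V) : R :=
  ∑ p ∈ G.finsetWalkLength t s o, p.weight wt

open Classical in
/-- The truncated Bellman–Ford iterates `y_δ⁽ᵗ⁾` with source `s` and offset `δ`:
`y⁽⁰⁾(o) = 1` if `o = s` and `0` otherwise; for `t ≥ 1`, if `o` is reachable from `s`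
and `dist(s,o) ≤ t ≤ dist(s,o) + δ` then `o` aggregates, over the constrained edge set
(neighbors `u` reachable from `s` with `dist(s,u) < dist(s,o) + δ`), the messages
`y⁽ᵗ⁻¹⁾(u) * wt u o`, plus `y⁽⁰⁾(o)`; otherwise `y⁽ᵗ⁾(o) = y⁽ᵗ⁻¹⁾(o)`. -/
noncomputable def truncBF {V : Type*} [Fintype V] (G : SimpleGraph V)
    {R : Type*} [CommSemiring R] (wt : V → V → R) (s : V) (δ : ℕ) : ℕ → V → R
  | 0 => fun o => if o = s then 1 else 0
  | (t + 1) => fun o =>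
      if G.Reachable s o ∧ G.dist s o ≤ t + 1 ∧ t + 1 ≤ G.dist s o + δ then
        (∑ u ∈ Finset.univ.filter
            (fun u => G.Adj u o ∧ G.Reachable s u ∧ G.dist s u < G.dist s o + δ),
          truncBF G wt s δ t u * wt u o) + (if o = s then 1 else 0)
      else truncBF G wt s δ t o

section Aux

variable {V : Type*} [Fintype V] [DecidableEq V] {G : SimpleGraph V} [DecidableRel G.Adj]
  {R : Type*} [CommSemiring R]

omit [Fintype V] [DecidableEq V] [DecidableRel G.Adj] in
lemma weight_concat (wt : V → V → R) {u v w : V} (p : G.Walk u v) (h : G.Adj v w) :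
    (p.concat h).weight wt = p.weight wt * wt v w := by
  simp [SimpleGraph.Walk.weight]

lemma pathSum_succ (wt : V → V → R) (n : ℕ) (s o : V) :
    pathSum G wt (n + 1) s o
      = ∑ u ∈ Finset.univ.filter (fun u => G.Adj u o), pathSum G wt n s u * wt u o := by
  classical
  simp only [pathSum, Finset.sum_mul]
  have key : ∑ x ∈ (Finset.univ.filter (fun u => G.Adj u o)).sigma
        (fun u => G.finsetWalkLength n s u), (x.2.weight wt) * wt x.1 o
      = ∑ q ∈ G.finsetWalkLength (n + 1) s o, q.weight wt := by
    refine Finset.sum_bij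
      (fun (x : Σ u : V, G.Walk s u) (hx : x ∈ (Finset.univ.filter (fun u => G.Adj u o)).sigma
          (fun u => G.finsetWalkLength n s u)) =>
        x.2.concat (by simp only [Finset.mem_sigma, Finset.mem_filter] at hx; exact hx.1.2))
      ?_ ?_ ?_ ?_
    · intro x hx
      simp only [Finset.mem_sigma, Finset.mem_filter, SimpleGraph.mem_finsetWalkLength_iff]
        at hx ⊢
      simp [SimpleGraph.Walk.length_concat, hx.2]
    · intro x hx y hy he
      obtain ⟨hv, hc⟩ := SimpleGraph.Walk.concat_inj he
      obtain ⟨u, p⟩ := x; obtain ⟨u', p'⟩ := y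
      cases hv
      simp only [SimpleGraph.Walk.copy_rfl_rfl] at hc
      cases hc
      rfl
    · intro q hq
      simp only [SimpleGraph.mem_finsetWalkLength_iff] at hq
      cases q with
      | nil => simp at hq
      | cons h p =>
        obtain ⟨x, r, h', hc⟩ := SimpleGraph.Walk.exists_cons_eq_concat h p
        refine ⟨⟨x, r⟩, ?_, hc.symm⟩
        simp only [Finset.mem_sigma, Finset.mem_filter, SimpleGraph.mem_finsetWalkLength_iff]
        have hlen : (r.concat h').length = n + 1 := by rw [← hc]; simpa using hq
        rw [SimpleGraph.Walk.length_concat] at hlen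
        exact ⟨⟨Finset.mem_univ _, h'⟩, Nat.succ_injective hlen⟩
    · intro x hx
      rw [weight_concat]
  rw [← key, Finset.sum_sigma]

lemma pathSum_eq_zero_of_short (wt : V → V → R) {n : ℕ} {s u : V}
    (h : ¬ (G.Reachable s u ∧ G.dist s u ≤ n)) : pathSum G wt n s u = 0 := by
  refine Finset.sum_eq_zero fun p hp => ?_
  rw [SimpleGraph.mem_finsetWalkLength_iff] at hp
  exact absurd ⟨⟨p⟩, hp ▸ SimpleGraph.dist_le p⟩ h

end Aux

/-- When the offset is `δ = 0`, the truncated Bellman–Ford aggregates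
only the shortest paths: for every vertex `o` reachable from `s`, the final
representation `yᶠ(o) = y⁽ᵈⁱˢᵗ⁽ˢ,ᵒ⁾⁾(o)` equals the sum of the weights of all walks
from `s` to `o` of length exactly `dist(s,o)`. -/
theorem truncBF_offset_zero_eq_shortest_pathSum {V : Type*} [Fintype V] [DecidableEq V]
    (G : SimpleGraph V) [DecidableRel G.Adj] {R : Type*} [CommSemiring R]
    (wt : V → V → R) (s : V) (o : V) (h : G.Reachable s o) :
    truncBF G wt s 0 (G.dist s o) o = pathSum G wt (G.dist s o) s o := by
  classical
  obtain ⟨n, hn⟩ : ∃ n, G.dist s o = n := ⟨_, rfl⟩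
  rw [hn]
  induction n generalizing o with
  | zero =>
    have hso : s = o := h.dist_eq_zero_iff.mp hn
    subst hso
    simp only [truncBF, if_pos rfl, pathSum]
    have : G.finsetWalkLength 0 s s = {SimpleGraph.Walk.nil} := by
      ext p
      simp only [SimpleGraph.mem_finsetWalkLength_iff, Finset.mem_singleton]
      constructor
      · intro hp; exact SimpleGraph.Walk.nil_iff_eq_nil.mp (SimpleGraph.Walk.length_eq_zero_iff.mp hp)
      · rintro rfl; rfl
    rw [this, Finset.sum_singleton]
    rfl
  | succ n ih =>
    have hos : o ≠ s := by
      rintro rfl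
      rw [h.dist_eq_zero_iff.mpr rfl] at hn
      exact Nat.succ_ne_zero n hn.symm
    simp only [truncBF, hn]
    rw [if_pos ⟨h, le_refl _, by omega⟩, if_neg hos, add_zero, pathSum_succ]
    have hcong : ∑ u ∈ Finset.univ.filter
          (fun u => G.Adj u o ∧ G.Reachable s u ∧ G.dist s u < n + 1 + 0),
        truncBF G wt s 0 n u * wt u o
        = ∑ u ∈ Finset.univ.filter
            (fun u => G.Adj u o ∧ G.Reachable s u ∧ G.dist s u < n + 1 + 0),
          pathSum G wt n s u * wt u o := by
      refine Finset.sum_congr rfl fun u hu => ?_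
      simp only [Finset.mem_filter, Finset.mem_univ, true_and] at hu
      obtain ⟨hadj, hr, hdlt⟩ := hu
      have hdu : G.dist s u = n := by
        have h1 : G.dist s o ≤ G.dist s u + 1 := by
          obtain ⟨p, hp⟩ := hr.exists_walk_length_eq_dist
          have := G.dist_le (p.concat hadj)
          rwa [SimpleGraph.Walk.length_concat, hp] at this
        omega
      rw [ih u hr hdu]
    rw [hcong]
    refine Finset.sum_subset ?_ ?_
    · intro u hu
      simp only [Finset.mem_filter] at hu ⊢
      exact ⟨hu.1, hu.2.1⟩
    · intro u hu hnu
      simp only [Finset.mem_filter, Finset.mem_univ, true_and, not_and, not_lt] at hu hnu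
      have hz : pathSum G wt n s u = 0 := by
        refine pathSum_eq_zero_of_short wt fun hc => ?_
        have := hnu hu hc.1
        have := hc.2
        omega
      rw [hz, zero_mul]
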